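/- Let B be a complex 2×2 matrix with det B = 1 such that (1/i)·(Bᴴ·J·B − J) is positive semidefinite (B is J-contractive). If B₂₁ ≠ 0 then Im(B₂₂/B₂₁) ≥ 0, and if B₁₁ ≠ 0 then Im(B₁₂/B₁₁) ≥ 0. -/

import Mathlib

open MeasureTheory Complex
open scoped ENNReal ComplexOrder

noncomputable section


/-- The matrix `J = [[0,-1],[1,0]]` over `ℂ`. -/
def Jc : Matrix (Fin 2) (Fin 2) ℂ := !![0, -1; 1, 0]

theorem stmt15 (B : Matrix (Fin 2) (Fin 2) ℂ) (hdet : B.det = 1)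
    (hJ : (Complex.I⁻¹ • (B.conjTranspose * Jc * B - Jc)).PosSemidef) :
    (B 1 0 ≠ 0 → 0 ≤ (B 1 1 / B 1 0).im) ∧ (B 0 0 ≠ 0 → 0 ≤ (B 0 1 / B 0 0).im) := by
  have hd : B 0 0 * B 1 1 - B 0 1 * B 1 0 = 1 := by
    have := hdet; rw [Matrix.det_fin_two] at this; linear_combination this
  have hre := congrArg Complex.re hd
  have him := congrArg Complex.im hd
  simp [Complex.sub_re, Complex.sub_im, Complex.mul_re, Complex.mul_im] at hre him
  constructor
  · intro hb
    have h := hJ.dotProduct_mulVec_nonneg ![B 1 1, -(B 1 0)]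
    simp [dotProduct, Matrix.mulVec, Fin.sum_univ_two, Jc, Matrix.mul_apply,
      Matrix.conjTranspose_apply, Matrix.sub_apply, Matrix.smul_apply] at h
    rw [Complex.le_def] at h
    obtain ⟨h1, -⟩ := h
    simp [Complex.add_re, Complex.mul_re, Complex.mul_im, Complex.sub_re, Complex.sub_im,
      Complex.inv_re, Complex.inv_im, Complex.normSq, Complex.I_re, Complex.I_im] at h1
    have hsq : 0 < Complex.normSq (B 1 0) := Complex.normSq_pos.mpr hb
    have key : 0 ≤ (B 1 1).im * (B 1 0).re - (B 1 1).re * (B 1 0).im := by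
      set a := B 0 0; set b := B 0 1; set c := B 1 0; set d := B 1 1
      nlinarith [h1, hre, him]
    have heq : (B 1 1 / B 1 0).im
        = ((B 1 1).im * (B 1 0).re - (B 1 1).re * (B 1 0).im) / Complex.normSq (B 1 0) := by
      rw [Complex.div_im]; ring
    rw [heq]
    exact div_nonneg key hsq.le
  · intro hb
    have h := hJ.dotProduct_mulVec_nonneg ![-(B 0 1), B 0 0]
    simp [dotProduct, Matrix.mulVec, Fin.sum_univ_two, Jc, Matrix.mul_apply,
      Matrix.conjTranspose_apply, Matrix.sub_apply, Matrix.smul_apply] at h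
    rw [Complex.le_def] at h
    obtain ⟨h1, -⟩ := h
    simp [Complex.add_re, Complex.mul_re, Complex.mul_im, Complex.sub_re, Complex.sub_im,
      Complex.inv_re, Complex.inv_im, Complex.normSq, Complex.I_re, Complex.I_im] at h1
    have hsq : 0 < Complex.normSq (B 0 0) := Complex.normSq_pos.mpr hb
    have key : 0 ≤ (B 0 1).im * (B 0 0).re - (B 0 1).re * (B 0 0).im := by
      set a := B 0 0; set b := B 0 1; set c := B 1 0; set d := B 1 1
      nlinarith [h1, hre, him]
    have heq : (B 0 1 / B 0 0).im
        = ((B 0 1).im * (B 0 0).re - (B 0 1).re * (B 0 0).im) / Complex.normSq (B 0 0) := by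
      rw [Complex.div_im]; ring
    rw [heq]
    exact div_nonneg key hsq.le

end
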